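/- Let ζ : ℝ≥0 → ℝ be continuously differentiable with ζ'(s) = η - ε c sin(ζ(s)) for constants η ≥ 1, ε ≥ 0, c ≥ 0. Then for all τ ≥ 0 and T > 0, |∫_τ^{τ+T} e^{i ζ(s)} ds| ≤ 2/η + ε c T / η ≤ 2 + ε c T. -/

import Mathlib

open Complex

theorem stmt_3 (η ε c : ℝ) (hη : 1 ≤ η) (hε : 0 ≤ ε) (hc : 0 ≤ c)
    (ζ : ℝ → ℝ)
    (hζ : ∀ s, 0 ≤ s → HasDerivAt ζ (η - ε * c * Real.sin (ζ s)) s)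
    (τ T : ℝ) (hτ : 0 ≤ τ) (hT : 0 < T) :
    ‖∫ s in τ..(τ + T), Complex.exp (Complex.I * (ζ s : ℂ))‖ ≤ 2 / η + ε * c * T / η ∧
      2 / η + ε * c * T / η ≤ 2 + ε * c * T := by
  have hη0 : (0:ℝ) < η := by linarith
  have hτT : τ ≤ τ + T := by linarith
  constructor
  · set f : ℝ → ℂ := fun s => Complex.exp (Complex.I * (ζ s : ℂ)) with hf
    set d : ℝ → ℝ := fun s => η - ε * c * Real.sin (ζ s) with hdd
    have huIcc : Set.uIcc τ (τ + T) = Set.Icc τ (τ + T) := Set.uIcc_of_le hτT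
    have hmem : ∀ s ∈ Set.uIcc τ (τ + T), 0 ≤ s := by
      intro s hs
      rw [huIcc] at hs
      linarith [hs.1]
    have hd : ∀ s ∈ Set.uIcc τ (τ + T), HasDerivAt ζ (d s) s :=
      fun s hs => hζ s (hmem s hs)
    have hζcont : ContinuousOn ζ (Set.uIcc τ (τ + T)) :=
      fun s hs => ((hd s hs).continuousAt).continuousWithinAt
    have hfcont : ContinuousOn f (Set.uIcc τ (τ + T)) := by
      apply Complex.continuous_exp.comp_continuousOn
      exact (Complex.continuous_ofReal.comp_continuousOn hζcont).const_smul Complex.I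
    have hdcont : ContinuousOn d (Set.uIcc τ (τ + T)) :=
      continuousOn_const.sub (continuousOn_const.mul (Real.continuous_sin.comp_continuousOn hζcont))
    have hfnorm : ∀ s, ‖f s‖ = 1 := by
      intro s
      simp [hf, Complex.norm_exp]
    -- FTC for the main part
    have hF : ∀ s ∈ Set.uIcc τ (τ + T),
        HasDerivAt (fun s => -Complex.I * f s) ((d s : ℂ) * f s) s := by
      intro s hs
      have h1 : HasDerivAt (fun s => (ζ s : ℂ)) (d s : ℂ) s := (hd s hs).ofReal_comp
      have h2 : HasDerivAt (fun s => Complex.I * (ζ s : ℂ)) (Complex.I * (d s : ℂ)) s :=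
        h1.const_mul Complex.I
      have h3 := h2.cexp
      have h4 := h3.const_mul (-Complex.I)
      convert h4 using 1
      · rfl
      have : Complex.I * Complex.I = -1 := Complex.I_mul_I
      ring_nf
      rw [Complex.I_sq]
      ring
    have hint1 : IntervalIntegrable (fun s => (d s : ℂ) * f s) MeasureTheory.volume τ (τ + T) :=
      ((Complex.continuous_ofReal.comp_continuousOn hdcont).mul hfcont).intervalIntegrable
    have key : (∫ s in τ..(τ + T), (d s : ℂ) * f s)
        = -Complex.I * f (τ + T) - -Complex.I * f τ :=
      intervalIntegral.integral_eq_sub_of_hasDerivAt hF hint1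
    have hkeynorm : ‖∫ s in τ..(τ + T), (d s : ℂ) * f s‖ ≤ 2 := by
      rw [key]
      calc ‖-Complex.I * f (τ + T) - -Complex.I * f τ‖
          ≤ ‖-Complex.I * f (τ + T)‖ + ‖-Complex.I * f τ‖ := norm_sub_le _ _
        _ = 2 := by simp [norm_mul, hfnorm]; norm_num
    -- the remainder part
    have hint2 : IntervalIntegrable (fun s => ((ε * c * Real.sin (ζ s) : ℝ) : ℂ) * f s)
        MeasureTheory.volume τ (τ + T) := by
      apply ContinuousOn.intervalIntegrable
      exact (Complex.continuous_ofReal.comp_continuousOn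
        (continuousOn_const.mul (Real.continuous_sin.comp_continuousOn hζcont))).mul hfcont
    have hrem : ‖∫ s in τ..(τ + T), ((ε * c * Real.sin (ζ s) : ℝ) : ℂ) * f s‖ ≤ ε * c * T := by
      have := intervalIntegral.norm_integral_le_of_norm_le_const
        (C := ε * c) (f := fun s => ((ε * c * Real.sin (ζ s) : ℝ) : ℂ) * f s)
        (a := τ) (b := τ + T) ?_
      · calc ‖∫ s in τ..(τ + T), ((ε * c * Real.sin (ζ s) : ℝ) : ℂ) * f s‖
            ≤ ε * c * |τ + T - τ| := this
          _ = ε * c * T := by rw [show τ + T - τ = T by ring, abs_of_pos hT]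
      · intro x hx
        rw [norm_mul, hfnorm, mul_one, Complex.norm_real, Real.norm_eq_abs, abs_mul]
        calc |ε * c| * |Real.sin (ζ x)| ≤ |ε * c| * 1 :=
              mul_le_mul_of_nonneg_left (abs_le.mpr ⟨Real.neg_one_le_sin _, Real.sin_le_one _⟩) (abs_nonneg _)
          _ = ε * c := by rw [mul_one, _root_.abs_of_nonneg (mul_nonneg hε hc)]
    -- combine
    have hsplit : (η : ℂ) * (∫ s in τ..(τ + T), f s)
        = (∫ s in τ..(τ + T), (d s : ℂ) * f s)
          + ∫ s in τ..(τ + T), ((ε * c * Real.sin (ζ s) : ℝ) : ℂ) * f s := by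
      rw [← intervalIntegral.integral_add hint1 hint2, ← intervalIntegral.integral_const_mul]
      apply intervalIntegral.integral_congr
      intro s _
      simp only [hdd]
      push_cast
      ring
    have hnorm : η * ‖∫ s in τ..(τ + T), f s‖ ≤ 2 + ε * c * T := by
      have : ‖(η : ℂ) * (∫ s in τ..(τ + T), f s)‖ ≤ 2 + ε * c * T := by
        rw [hsplit]
        exact le_trans (norm_add_le _ _) (add_le_add hkeynorm hrem)
      rwa [norm_mul, Complex.norm_real, Real.norm_of_nonneg (le_of_lt hη0)] at this
    calc ‖∫ s in τ..(τ + T), f s‖ = η * ‖∫ s in τ..(τ + T), f s‖ / η := by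
          field_simp
      _ ≤ (2 + ε * c * T) / η := by gcongr
      _ = 2 / η + ε * c * T / η := by ring
  · have h1 : 2 / η ≤ 2 := by
      rw [div_le_iff₀ hη0]
      nlinarith
    have h2 : ε * c * T / η ≤ ε * c * T := by
      rw [div_le_iff₀ hη0]
      nlinarith [mul_nonneg (mul_nonneg hε hc) hT.le]
    linarith
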